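/- Let X be a proper dotted metric space (a metric space in which all distances are integers and every ball is a finite set). Let K ≥ 1, ε ≥ 0, and let G be a set of (K,ε)-quasi-isometries of X that is closed in the compact-open topology and for which there exist a point x ∈ X and a constant C ≥ 0 with d(x, g(x)) ≤ C for every g ∈ G. Then G is compact in the compact-open topology. -/

import Mathlib

noncomputable section
open scoped NNReal ENNReal

/-- A `(K, ε)`-quasi-isometry between two (pseudo)distance functions: coarsely bi-Lipschitz
with `ε`-dense image. -/
def IsQuasiIsometryDist {α β : Type*} (d₁ : α → α → ℝ) (d₂ : β → β → ℝ) (K ε : ℝ)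
    (f : α → β) : Prop :=
  (∀ x y, d₁ x y / K - ε ≤ d₂ (f x) (f y) ∧ d₂ (f x) (f y) ≤ K * d₁ x y + ε) ∧
    ∀ z, ∃ x, d₂ z (f x) ≤ ε

/-- Two self maps are at bounded distance from each other. -/
def BoundedDistEquiv {α : Type*} (d : α → α → ℝ) (f g : α → α) : Prop :=
  ∃ C : ℝ, ∀ x, d (f x) (g x) ≤ C

/-- The Gromov product of `x` and `y` with respect to the basepoint `b`. -/
def gromovProd {α : Type*} (d : α → α → ℝ) (x y b : α) : ℝ := (d x b + d y b - d x y) / 2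

/-- Gromov hyperbolicity (four-point condition) of a distance function. -/
def IsGromovHyperbolicDist {α : Type*} (d : α → α → ℝ) (δ : ℝ) : Prop :=
  ∀ x y z b, min (gromovProd d x z b) (gromovProd d z y b) - δ ≤ gromovProd d x y b

/-- The Cayley graph of a group with respect to a generating set `S`. -/
def cayleyGraph (G : Type*) [Group G] (S : Set G) : SimpleGraph G :=
  SimpleGraph.fromRel (fun g h => g⁻¹ * h ∈ S)

/-- The word metric on a group `G` with respect to a generating set `S`, as a real valued
distance function (the graph metric of the Cayley graph). -/
noncomputable def wordDist (G : Type*) [Group G] (S : Set G) (g h : G) : ℝ :=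
  ((cayleyGraph G S).dist g h : ℝ)
/-- A dotted metric space: all distances are integers. -/
def IsDotted (X : Type*) [MetricSpace X] : Prop := ∀ x y : X, ∃ n : ℤ, dist x y = (n : ℝ)

/-- A proper dotted metric space: every ball is a finite set. -/
def IsProperDotted (X : Type*) [MetricSpace X] : Prop :=
  (∀ x y : X, ∃ n : ℤ, dist x y = (n : ℝ)) ∧
    ∀ (x : X) (r : ℝ), (Metric.closedBall x r).Finite

/-- A set of `(K, ε)`-quasi-isometries of a proper dotted metric space which is
closed in the compact-open topology and moves some point a uniformly bounded amount is compact
in the compact-open topology. -/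
theorem closed_boundedOrbit_set_of_uniform_quasiIsometries_isCompact
    {X : Type*} [MetricSpace X] (hX : IsProperDotted X)
    (K ε : ℝ) (hK : 1 ≤ K) (hε : 0 ≤ ε)
    (G : Set C(X, X))
    (hQI : ∀ g ∈ G, IsQuasiIsometryDist (dist : X → X → ℝ) dist K ε g)
    (hclosed : IsClosed G)
    (x : X) (C : ℝ) (hC : 0 ≤ C)
    (hbound : ∀ g ∈ G, dist x (g x) ≤ C) :
    IsCompact G := by
  haveI hdisc : DiscreteTopology X := by
    rw [discreteTopology_iff_isOpen_singleton]
    intro a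
    rw [Metric.isOpen_singleton_iff]
    refine ⟨1, one_pos, fun y hy => ?_⟩
    obtain ⟨n, hn⟩ := hX.1 y a
    have h0 : 0 ≤ dist y a := dist_nonneg
    have : dist y a = 0 := by
      rw [hn] at hy h0 ⊢
      have : n = 0 := by
        exact_mod_cast le_antisymm
          (by exact_mod_cast Int.lt_add_one_iff.mp (by exact_mod_cast hy) : n ≤ 0)
          (by exact_mod_cast h0)
      simp [this]
    exact dist_eq_zero.mp this
  set s : X → Set X := fun y => Metric.closedBall x (C + K * dist x y + ε) with hs
  set A : Set C(X, X) := {f | ∀ y, f y ∈ s y} with hA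
  have hAcomp : IsCompact A := by
    apply ArzelaAscoli.isCompact_of_equicontinuous
    · have himg : ContinuousMap.toFun '' A = Set.pi Set.univ s := by
        ext f
        constructor
        · rintro ⟨g, hg, rfl⟩ y _
          exact hg y
        · intro hf
          exact ⟨⟨f, continuous_of_discreteTopology⟩, fun y => hf y (Set.mem_univ y), rfl⟩
      rw [himg]
      exact isCompact_univ_pi fun y => (hX.2 x _).isCompact
    · intro x₀ U hU
      simp only [nhds_discrete, Filter.eventually_pure]
      exact fun i => refl_mem_uniformity hU
  apply hAcomp.of_isClosed_subset hclosed
  intro g hg y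
  have h1 : dist x (g y) ≤ dist x (g x) + dist (g x) (g y) := dist_triangle _ _ _
  have h2 : dist (g x) (g y) ≤ K * dist x y + ε := ((hQI g hg).1 x y).2
  have := hbound g hg
  simp only [s, Metric.mem_closedBall, dist_comm (g y) x]
  linarith
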